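/- Let m ≥ 1 with 2 ∣ m, let g ≥ 2, let γ ∈ ZMod m, and let φ : ZMod m →+* ZMod 2 be the natural ring homomorphism; assume φ(γ) = 1 (γ is odd). Let W = W(m, g, γ) be the twist group defined in the context, acting on V = Fin g → ZMod m × ZMod m, and define q : V → ZMod 2 by q(x) = ∑ᵢ φ((1 − (x i).1)·(1 − (x i).2)). Then q(σ x) = q(x) for every σ ∈ W and every x ∈ V. (This is the invariance claim in the proof of Theorem 5.7: for g > 1 and m even, when all values on contours around holes and punctures are odd, the parity of Σᵢ (1−σ(aᵢ))(1−σ(bᵢ)) modulo 2 is preserved under all Dehn twists, so the Arf invariant δ is well defined and equals 1 on such Arf functions.) -/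
import Mathlib


/-- Shear of the `β`-components of `x : Fin g → ZMod m × ZMod m` by an amount depending
only on the `α`-components. -/
def shearB (m g : ℕ) (h : (Fin g → ZMod m) → Fin g → ZMod m) :
    Equiv.Perm (Fin g → ZMod m × ZMod m) where
  toFun x k := ((x k).1, (x k).2 + h (fun l => (x l).1) k)
  invFun x k := ((x k).1, (x k).2 - h (fun l => (x l).1) k)
  left_inv x := by funext k; simp
  right_inv x := by funext k; simp

/-- Shear of the `α`-components of `x : Fin g → ZMod m × ZMod m` by an amount depending
only on the `β`-components. -/
def shearA (m g : ℕ) (h : (Fin g → ZMod m) → Fin g → ZMod m) :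
    Equiv.Perm (Fin g → ZMod m × ZMod m) where
  toFun x k := ((x k).1 + h (fun l => (x l).2) k, (x k).2)
  invFun x k := ((x k).1 - h (fun l => (x l).2) k, (x k).2)
  left_inv x := by funext k; simp
  right_inv x := by funext k; simp

/-- Apply the permutation `e` of `ZMod m × ZMod m` at the single coordinate `i`. -/
def atC (m g : ℕ) (i : Fin g) (e : Equiv.Perm (ZMod m × ZMod m)) :
    Equiv.Perm (Fin g → ZMod m × ZMod m) :=
  Equiv.piCongrRight fun k => if k = i then e else Equiv.refl _

/-- `(α, β) ↦ (−α, −β)`. -/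
def negPair (m : ℕ) : Equiv.Perm (ZMod m × ZMod m) where
  toFun p := (-p.1, -p.2)
  invFun p := (-p.1, -p.2)
  left_inv := by rintro ⟨a, b⟩; simp
  right_inv := by rintro ⟨a, b⟩; simp

/-- `(α, β) ↦ (−β, α)`. -/
def rotPair (m : ℕ) : Equiv.Perm (ZMod m × ZMod m) where
  toFun p := (-p.2, p.1)
  invFun p := (p.2, -p.1)
  left_inv := by rintro ⟨a, b⟩; simp
  right_inv := by rintro ⟨a, b⟩; simp

/-- `(α, β) ↦ (−β, α − γ − 1)`. -/
def t3Pair (m : ℕ) (γ : ZMod m) : Equiv.Perm (ZMod m × ZMod m) where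
  toFun p := (-p.2, p.1 - γ - 1)
  invFun p := (p.2 + γ + 1, -p.1)
  left_inv := by rintro ⟨a, b⟩; simp [Prod.ext_iff]; ring
  right_inv := by rintro ⟨a, b⟩; simp [Prod.ext_iff]; ring

/-- Dehn twist action `T1a(i) : (αᵢ, βᵢ) ↦ (αᵢ+βᵢ, βᵢ)`. -/
def T1a (m g : ℕ) (i : Fin g) : Equiv.Perm (Fin g → ZMod m × ZMod m) :=
  shearA m g fun b k => if k = i then b i else 0

/-- Dehn twist action `T1b(i) : (αᵢ, βᵢ) ↦ (αᵢ, βᵢ+αᵢ)`. -/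
def T1b (m g : ℕ) (i : Fin g) : Equiv.Perm (Fin g → ZMod m × ZMod m) :=
  shearB m g fun a k => if k = i then a i else 0

/-- Dehn twist action `T2(i,j) : βᵢ ↦ βᵢ − αⱼ − 1, βⱼ ↦ βⱼ − αᵢ − 1`. -/
def T2 (m g : ℕ) (i j : Fin g) : Equiv.Perm (Fin g → ZMod m × ZMod m) :=
  shearB m g fun a k => if k = i then -a j - 1 else if k = j then -a i - 1 else 0

/-- Dehn twist action `T3` at the index `i`: `(αᵢ, βᵢ) ↦ (−βᵢ, αᵢ − γ − 1)`. -/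
def T3 (m g : ℕ) (i : Fin g) (γ : ZMod m) : Equiv.Perm (Fin g → ZMod m × ZMod m) :=
  atC m g i (t3Pair m γ)

/-- Dehn twist action `T4(i,j)`: interchange the pairs at positions `i` and `j`. -/
def T4 (m g : ℕ) (i j : Fin g) : Equiv.Perm (Fin g → ZMod m × ZMod m) :=
  Equiv.arrowCongr (Equiv.swap i j) (Equiv.refl _)

/-- Dehn twist action `T5a(i) : (αᵢ, βᵢ) ↦ (−αᵢ, −βᵢ)`. -/
def T5a (m g : ℕ) (i : Fin g) : Equiv.Perm (Fin g → ZMod m × ZMod m) :=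
  atC m g i (negPair m)

/-- Dehn twist action `T5b(i) : (αᵢ, βᵢ) ↦ (−βᵢ, αᵢ)`. -/
def T5b (m g : ℕ) (i : Fin g) : Equiv.Perm (Fin g → ZMod m × ZMod m) :=
  atC m g i (rotPair m)

/-- The generators of the twist group: `T1a(i)`, `T1b(i)`, `T2(i,j)` for `i ≠ j`, `T3` at
the last index, `T4(i,j)` for `i ≠ j`, `T5a(i)`, `T5b(i)`. -/
def twistGens (m g : ℕ) (hg : 0 < g) (γ : ZMod m) :
    Set (Equiv.Perm (Fin g → ZMod m × ZMod m)) :=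
  (Set.range fun i => T1a m g i) ∪ (Set.range fun i => T1b m g i) ∪
    {σ | ∃ i j : Fin g, i ≠ j ∧ σ = T2 m g i j} ∪
    {T3 m g ⟨g - 1, Nat.sub_lt hg Nat.one_pos⟩ γ} ∪
    {σ | ∃ i j : Fin g, i ≠ j ∧ σ = T4 m g i j} ∪
    (Set.range fun i => T5a m g i) ∪ (Set.range fun i => T5b m g i)

/-- The twist group `W(m, g, γ)`: the subgroup of `Equiv.Perm (Fin g → ZMod m × ZMod m)`
generated by the Dehn twist actions. -/
def twistGroup (m g : ℕ) (hg : 0 < g) (γ : ZMod m) :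
    Subgroup (Equiv.Perm (Fin g → ZMod m × ZMod m)) :=
  Subgroup.closure (twistGens m g hg γ)


section Aux

variable {m g : ℕ} (h2 : (2 : ℕ) ∣ m)

private lemma aux_T1a (i : Fin g) (x : Fin g → ZMod m × ZMod m) :
    (∑ k : Fin g, ZMod.castHom h2 (ZMod 2) ((1 - ((T1a m g i x) k).1) * (1 - ((T1a m g i x) k).2)))
      = ∑ k : Fin g, ZMod.castHom h2 (ZMod 2) ((1 - (x k).1) * (1 - (x k).2)) := by
  set φ := ZMod.castHom h2 (ZMod 2)
  refine Finset.sum_congr rfl fun k _ => ?_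
  show φ ((1 - ((x k).1 + if k = i then (x i).2 else 0)) * (1 - (x k).2))
      = φ ((1 - (x k).1) * (1 - (x k).2))
  by_cases hk : k = i
  · subst hk
    rw [if_pos rfl]
    simp only [map_mul, map_sub, map_add, map_one]
    generalize φ (x k).1 = A; generalize φ (x k).2 = B
    revert A B; decide
  · rw [if_neg hk, add_zero]

private lemma aux_T1b (i : Fin g) (x : Fin g → ZMod m × ZMod m) :
    (∑ k : Fin g, ZMod.castHom h2 (ZMod 2) ((1 - ((T1b m g i x) k).1) * (1 - ((T1b m g i x) k).2)))
      = ∑ k : Fin g, ZMod.castHom h2 (ZMod 2) ((1 - (x k).1) * (1 - (x k).2)) := by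
  set φ := ZMod.castHom h2 (ZMod 2)
  refine Finset.sum_congr rfl fun k _ => ?_
  show φ ((1 - (x k).1) * (1 - ((x k).2 + if k = i then (x i).1 else 0)))
      = φ ((1 - (x k).1) * (1 - (x k).2))
  by_cases hk : k = i
  · subst hk
    rw [if_pos rfl]
    simp only [map_mul, map_sub, map_add, map_one]
    generalize φ (x k).1 = A; generalize φ (x k).2 = B
    revert A B; decide
  · rw [if_neg hk, add_zero]

private lemma aux_T2 (i j : Fin g) (hij : i ≠ j) (x : Fin g → ZMod m × ZMod m) :
    (∑ k : Fin g, ZMod.castHom h2 (ZMod 2) ((1 - ((T2 m g i j x) k).1) * (1 - ((T2 m g i j x) k).2)))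
      = ∑ k : Fin g, ZMod.castHom h2 (ZMod 2) ((1 - (x k).1) * (1 - (x k).2)) := by
  set φ := ZMod.castHom h2 (ZMod 2) with hφ
  set c : ZMod 2 := (1 - φ (x i).1) * (1 - φ (x j).1) with hcdef
  have key : ∀ k : Fin g,
      φ ((1 - ((T2 m g i j x) k).1) * (1 - ((T2 m g i j x) k).2)) =
        φ ((1 - (x k).1) * (1 - (x k).2)) +
          ((if k = i then c else 0) + (if k = j then c else 0)) := by
    intro k
    show φ ((1 - (x k).1) *
        (1 - ((x k).2 + if k = i then -(x j).1 - 1 else if k = j then -(x i).1 - 1 else 0)))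
      = _
    by_cases hki : k = i
    · subst hki
      have hkj : ¬ k = j := hij
      rw [if_pos rfl, if_pos rfl, if_neg hkj, add_zero, hcdef]
      simp only [map_mul, map_sub, map_add, map_one, map_neg]
      generalize φ (x k).1 = A; generalize φ (x k).2 = B; generalize φ (x j).1 = C
      revert A B C; decide
    · by_cases hkj : k = j
      · subst hkj
        rw [if_neg hki, if_neg hki, if_pos rfl, zero_add, hcdef]
        simp only [map_mul, map_sub, map_add, map_one, map_neg]
        generalize φ (x k).1 = A; generalize φ (x k).2 = B; generalize φ (x i).1 = C
        revert A B C; decide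
      · rw [if_neg hki, if_neg hki, if_neg hkj, if_neg hkj, add_zero, add_zero, add_zero]
  rw [Finset.sum_congr rfl fun k _ => key k, Finset.sum_add_distrib, Finset.sum_add_distrib]
  rw [Finset.sum_ite_eq' Finset.univ i fun _ => c, Finset.sum_ite_eq' Finset.univ j fun _ => c]
  have hc2 : ∀ d : ZMod 2, d + d = 0 := by decide
  simp [hc2 c]

private lemma aux_T3 (γ : ZMod m) (hγ : ZMod.castHom h2 (ZMod 2) γ = 1)
    (i : Fin g) (x : Fin g → ZMod m × ZMod m) :
    (∑ k : Fin g, ZMod.castHom h2 (ZMod 2) ((1 - ((T3 m g i γ x) k).1) * (1 - ((T3 m g i γ x) k).2)))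
      = ∑ k : Fin g, ZMod.castHom h2 (ZMod 2) ((1 - (x k).1) * (1 - (x k).2)) := by
  set φ := ZMod.castHom h2 (ZMod 2)
  refine Finset.sum_congr rfl fun k _ => ?_
  show φ ((1 - ((if k = i then t3Pair m γ else Equiv.refl _) (x k)).1) *
      (1 - ((if k = i then t3Pair m γ else Equiv.refl _) (x k)).2))
    = φ ((1 - (x k).1) * (1 - (x k).2))
  by_cases hk : k = i
  · rw [if_pos hk]
    show φ ((1 - (-(x k).2)) * (1 - ((x k).1 - γ - 1))) = _
    simp only [map_mul, map_sub, map_one, map_neg, hγ]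
    generalize φ (x k).1 = A; generalize φ (x k).2 = B
    revert A B; decide
  · rw [if_neg hk]; rfl

private lemma aux_T4 (i j : Fin g) (x : Fin g → ZMod m × ZMod m) :
    (∑ k : Fin g, ZMod.castHom h2 (ZMod 2) ((1 - ((T4 m g i j x) k).1) * (1 - ((T4 m g i j x) k).2)))
      = ∑ k : Fin g, ZMod.castHom h2 (ZMod 2) ((1 - (x k).1) * (1 - (x k).2)) := by
  set φ := ZMod.castHom h2 (ZMod 2)
  have hswap : ∀ k, (T4 m g i j) x k = x (Equiv.swap i j k) := by
    intro k
    show x ((Equiv.swap i j).symm k) = _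
    rw [Equiv.symm_swap]
  rw [Finset.sum_congr rfl fun k _ => by rw [hswap k]]
  exact Fintype.sum_equiv (Equiv.swap i j)
    (fun k => φ ((1 - (x (Equiv.swap i j k)).1) * (1 - (x (Equiv.swap i j k)).2)))
    (fun k => φ ((1 - (x k).1) * (1 - (x k).2))) (fun k => rfl)

private lemma aux_T5a (i : Fin g) (x : Fin g → ZMod m × ZMod m) :
    (∑ k : Fin g, ZMod.castHom h2 (ZMod 2) ((1 - ((T5a m g i x) k).1) * (1 - ((T5a m g i x) k).2)))
      = ∑ k : Fin g, ZMod.castHom h2 (ZMod 2) ((1 - (x k).1) * (1 - (x k).2)) := by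
  set φ := ZMod.castHom h2 (ZMod 2)
  refine Finset.sum_congr rfl fun k _ => ?_
  show φ ((1 - ((if k = i then negPair m else Equiv.refl _) (x k)).1) *
      (1 - ((if k = i then negPair m else Equiv.refl _) (x k)).2))
    = φ ((1 - (x k).1) * (1 - (x k).2))
  by_cases hk : k = i
  · rw [if_pos hk]
    show φ ((1 - (-(x k).1)) * (1 - (-(x k).2))) = _
    simp only [map_mul, map_sub, map_one, map_neg]
    generalize φ (x k).1 = A; generalize φ (x k).2 = B
    revert A B; decide
  · rw [if_neg hk]; rfl

private lemma aux_T5b (i : Fin g) (x : Fin g → ZMod m × ZMod m) :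
    (∑ k : Fin g, ZMod.castHom h2 (ZMod 2) ((1 - ((T5b m g i x) k).1) * (1 - ((T5b m g i x) k).2)))
      = ∑ k : Fin g, ZMod.castHom h2 (ZMod 2) ((1 - (x k).1) * (1 - (x k).2)) := by
  set φ := ZMod.castHom h2 (ZMod 2)
  refine Finset.sum_congr rfl fun k _ => ?_
  show φ ((1 - ((if k = i then rotPair m else Equiv.refl _) (x k)).1) *
      (1 - ((if k = i then rotPair m else Equiv.refl _) (x k)).2))
    = φ ((1 - (x k).1) * (1 - (x k).2))
  by_cases hk : k = i
  · rw [if_pos hk]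
    show φ ((1 - (-(x k).2)) * (1 - (x k).1)) = _
    simp only [map_mul, map_sub, map_one, map_neg]
    generalize φ (x k).1 = A; generalize φ (x k).2 = B
    revert A B; decide
  · rw [if_neg hk]; rfl

end Aux

/-- The invariance claim in the proof of Theorem 5.7: for `g > 1`, `m` even and `γ` odd,
the parity `q(x) = Σᵢ (1−αᵢ)(1−βᵢ) mod 2` is preserved by every element of the twist
group, so the Arf invariant `δ` is well defined. -/
theorem twist_parity_invariant (m g : ℕ) (hm : 1 ≤ m) (hg : 2 ≤ g)
    (h2 : (2 : ℕ) ∣ m) (γ : ZMod m) (hγ : ZMod.castHom h2 (ZMod 2) γ = 1) :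
    ∀ σ ∈ twistGroup m g (by omega) γ, ∀ x : Fin g → ZMod m × ZMod m,
      (∑ i : Fin g, ZMod.castHom h2 (ZMod 2) ((1 - ((σ x) i).1) * (1 - ((σ x) i).2)))
        = ∑ i : Fin g, ZMod.castHom h2 (ZMod 2) ((1 - (x i).1) * (1 - (x i).2)) := by
  intro σ hσ
  induction hσ using Subgroup.closure_induction with
  | one => intro x; rfl
  | mul a b ha hb iha ihb =>
      intro x
      have hab : (a * b) x = a (b x) := rfl
      rw [hab, iha (b x), ihb x]
  | inv a ha iha =>
      intro x
      have h1 := iha (a⁻¹ x)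
      have h2' : a (a⁻¹ x) = x := by simp
      rw [h2'] at h1
      exact h1.symm
  | mem τ hτ =>
      rcases hτ with ((((((⟨i, rfl⟩ | ⟨i, rfl⟩) | ⟨i, j, hij, rfl⟩) | hT3) | ⟨i, j, hij, rfl⟩) |
        ⟨i, rfl⟩) | ⟨i, rfl⟩)
      · exact fun x => aux_T1a h2 i x
      · exact fun x => aux_T1b h2 i x
      · exact fun x => aux_T2 h2 i j hij x
      · rw [Set.eq_of_mem_singleton hT3]
        exact fun x => aux_T3 h2 γ hγ _ x
      · exact fun x => aux_T4 h2 i j x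
      · exact fun x => aux_T5a h2 i x
      · exact fun x => aux_T5b h2 i x
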